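/- The alternating group A₅ on 5 letters admits a spherical system of generators of signature (3,3,3,3): there exist elements g₁, g₂, g₃, g₄ of the alternating group on Fin 5, each of order 3, with g₁·g₂·g₃·g₄ = 1, generating the whole alternating group. -/

import Mathlib

open Equiv Subgroup

private lemma normal_of_index_two {G : Type*} [Group G] (H : Subgroup G)
    (h : H.index = 2) : H.Normal := by
  constructor
  intro n hn g
  have h1 : g * n ∈ H ↔ (g ∈ H ↔ n ∈ H) := Subgroup.mul_mem_iff_of_index_two h
  have h2 : g * n * g⁻¹ ∈ H ↔ (g * n ∈ H ↔ g⁻¹ ∈ H) := Subgroup.mul_mem_iff_of_index_two h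
  rw [h2, h1, H.inv_mem_iff]
  tauto

private lemma aux_mem : (c[0,1,2] : Perm (Fin 5)) ∈ alternatingGroup (Fin 5) := by
  rw [Equiv.Perm.mem_alternatingGroup]; decide

private lemma aux_mem' : (c[2,3,4] : Perm (Fin 5)) ∈ alternatingGroup (Fin 5) := by
  rw [Equiv.Perm.mem_alternatingGroup]; decide

set_option maxRecDepth 100000 in
/-- The alternating group `A₅` admits a spherical system of generators of
signature `(3,3,3,3)`: elements `g₁, g₂, g₃, g₄`, each of order `3`, with
`g₁g₂g₃g₄ = 1`, generating the whole group. -/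
theorem A5_spherical_system_3333 :
    ∃ g₁ g₂ g₃ g₄ : alternatingGroup (Fin 5),
      orderOf g₁ = 3 ∧ orderOf g₂ = 3 ∧ orderOf g₃ = 3 ∧ orderOf g₄ = 3 ∧
      g₁ * g₂ * g₃ * g₄ = 1 ∧
      Subgroup.closure ({g₁, g₂, g₃, g₄} : Set (alternatingGroup (Fin 5))) = ⊤ := by
  set a : alternatingGroup (Fin 5) := ⟨c[0,1,2], aux_mem⟩ with ha
  set b : alternatingGroup (Fin 5) := ⟨c[2,3,4], aux_mem'⟩ with hb
  have horda : orderOf a = 3 := by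
    apply orderOf_eq_prime
    · ext x; revert x; decide
    · intro h; rw [Subtype.ext_iff] at h; revert h; decide
  have hordb : orderOf b = 3 := by
    apply orderOf_eq_prime
    · ext x; revert x; decide
    · intro h; rw [Subtype.ext_iff] at h; revert h; decide
  refine ⟨a, b, b⁻¹, a⁻¹, horda, hordb, by rw [orderOf_inv, hordb],
    by rw [orderOf_inv, horda], by group, ?_⟩
  -- the closure of {a, b, b⁻¹, a⁻¹} equals the closure of {a, b}
  have hcl : Subgroup.closure ({a, b, b⁻¹, a⁻¹} : Set (alternatingGroup (Fin 5)))
      = Subgroup.closure ({a, b} : Set (alternatingGroup (Fin 5))) := by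
    apply le_antisymm
    · rw [Subgroup.closure_le]
      intro x hx
      rcases hx with rfl | rfl | rfl | rfl
      · exact Subgroup.subset_closure (Set.mem_insert _ _)
      · exact Subgroup.subset_closure (Set.mem_insert_of_mem _ rfl)
      · exact (Subgroup.closure _).inv_mem
          (Subgroup.subset_closure (Set.mem_insert_of_mem _ rfl))
      · exact (Subgroup.closure _).inv_mem
          (Subgroup.subset_closure (Set.mem_insert _ _))
    · apply Subgroup.closure_mono
      intro x hx
      rcases hx with rfl | rfl
      · exact Set.mem_insert _ _
      · exact Set.mem_insert_of_mem _ (Set.mem_insert _ _)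
  rw [hcl]
  set H := Subgroup.closure ({a, b} : Set (alternatingGroup (Fin 5))) with hH
  have haH : a ∈ H := Subgroup.subset_closure (Set.mem_insert _ _)
  have hbH : b ∈ H := Subgroup.subset_closure (Set.mem_insert_of_mem _ rfl)
  -- cardinality of A₅
  have hcard : Nat.card (alternatingGroup (Fin 5)) = 60 := by
    rw [Nat.card_eq_fintype_card]; decide
  -- 3 divides the cardinality of H
  have h3 : (3 : ℕ) ∣ Nat.card H := by
    have := orderOf_dvd_natCard (⟨a, haH⟩ : H)
    rwa [Subgroup.orderOf_mk, horda] at this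
  -- 5 divides: a*b has order 5
  haveI : Fact (Nat.Prime 5) := ⟨by norm_num⟩
  have hord5 : orderOf (a * b) = 5 := by
    apply orderOf_eq_prime
    · ext x; revert x; decide
    · intro h; rw [Subtype.ext_iff] at h; revert h; decide
  have h5 : (5 : ℕ) ∣ Nat.card H := by
    have := orderOf_dvd_natCard (⟨a * b, H.mul_mem haH hbH⟩ : H)
    rwa [Subgroup.orderOf_mk, hord5] at this
  -- 2 divides: a*b*a*b⁻¹ has order 2
  have hord2 : orderOf (a * b * a * b⁻¹) = 2 := by
    apply orderOf_eq_prime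
    · ext x; revert x; decide
    · intro h; rw [Subtype.ext_iff] at h; revert h; decide
  have h2 : (2 : ℕ) ∣ Nat.card H := by
    have := orderOf_dvd_natCard (⟨a * b * a * b⁻¹,
      H.mul_mem (H.mul_mem (H.mul_mem haH hbH) haH) (H.inv_mem hbH)⟩ : H)
    rwa [Subgroup.orderOf_mk, hord2] at this
  have h30 : (30 : ℕ) ∣ Nat.card H := by
    have := Nat.Coprime.mul_dvd_of_dvd_of_dvd (by norm_num)
      (Nat.Coprime.mul_dvd_of_dvd_of_dvd (by norm_num) h2 h3) h5
    simpa using this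
  have hdvd : Nat.card H ∣ 60 := by
    rw [← hcard]; exact Subgroup.card_subgroup_dvd_card H
  -- hence the cardinality is 30 or 60
  have hcases : Nat.card H = 30 ∨ Nat.card H = 60 := by
    obtain ⟨k, hk⟩ := h30
    have hpos : 0 < Nat.card H := Nat.card_pos
    have hle : Nat.card H ≤ 60 := Nat.le_of_dvd (by norm_num) hdvd
    omega
  rcases hcases with h30' | h60
  · -- index 2: normal, contradicting simplicity
    exfalso
    have hidx : H.index = 2 := by
      have := Subgroup.card_mul_index H
      rw [h30', hcard] at this
      omega
    have : H.Normal := normal_of_index_two H hidx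
    rcases this.eq_bot_or_eq_top with h | h
    · rw [h, Subgroup.card_bot] at h30'; omega
    · rw [h, Subgroup.card_top, hcard] at h30'; omega
  · exact Subgroup.eq_top_of_card_eq H (by rw [h60, hcard])
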